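/- With the notation of the quotient construction (P̄_i = Q P_i Q', Q' an orthonormal basis matrix of (⋂_{i∈H} 𝒫_i)^⊥): for any nonempty subset E ⊆ H, the intersection of the column spans of the P̄_i for i ∈ E is {0} if and only if ⋂_{i∈E} 𝒫_i = ⋂_{i∈H} 𝒫_i. -/

import Mathlib

open Matrix

private lemma fix_of_dot' {d : ℕ} (P : Matrix (Fin d) (Fin d) ℝ) (hs : Pᵀ = P)
    (hi : P * P = P) (z : Fin d → ℝ) (h : (P *ᵥ z) ⬝ᵥ z = z ⬝ᵥ z) :
    P *ᵥ z = z := by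
  have hd : ∀ w : Fin d → ℝ, (P *ᵥ z) ⬝ᵥ w = z ⬝ᵥ (P *ᵥ w) := by
    intro w
    rw [← vecMul_transpose, hs, ← dotProduct_mulVec]
  have hPP : (P *ᵥ z) ⬝ᵥ (P *ᵥ z) = (P *ᵥ z) ⬝ᵥ z := by
    rw [hd, mulVec_mulVec, hi, dotProduct_comm]
  have key : (z - P *ᵥ z) ⬝ᵥ (z - P *ᵥ z) = 0 := by
    rw [sub_dotProduct, dotProduct_sub, dotProduct_sub, hPP, dotProduct_comm z (P *ᵥ z), h]
    ring
  have h0 : z - P *ᵥ z = 0 := dotProduct_self_eq_zero.mp key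
  linear_combination (norm := module) -h0

/-- Quotient construction: `P_i ∈ ℝ^{d×d}`, `i ∈ H`, are
orthogonal projections onto subspaces `𝒫_i` (their fixed-point sets),
`K = ⋂_{i∈H} 𝒫_i`, and `Q' ∈ ℝ^{d×m}` has orthonormal columns spanning `K^⊥`;
`P̄_i := Q P_i Q'` with `Q = Q'ᵀ` (which are orthogonal projections onto subspaces
`𝒫̄_i ⊆ ℝ^m`, their fixed-point sets). Then for any nonempty subset `E ⊆ H`,
`⋂_{i∈E} 𝒫̄_i = {0}` if and only if `⋂_{i∈E} 𝒫_i = ⋂_{i∈H} 𝒫_i`. -/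
theorem quotient_projection_intersection {N d m : ℕ} (H E : Finset (Fin N))
    (hE : E ⊆ H) (hEne : E.Nonempty)
    (P : Fin N → Matrix (Fin d) (Fin d) ℝ)
    (hsymm : ∀ i ∈ H, (P i)ᵀ = P i)
    (hidem : ∀ i ∈ H, P i * P i = P i)
    (Q' : Matrix (Fin d) (Fin m) ℝ)
    (horth : Q'ᵀ * Q' = 1)
    (hspan : {z : Fin d → ℝ | ∃ w : Fin m → ℝ, Q' *ᵥ w = z}
        = {y : Fin d → ℝ | ∀ x : Fin d → ℝ, (∀ i ∈ H, P i *ᵥ x = x) → x ⬝ᵥ y = 0}) :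
    (⋂ i ∈ E, {y : Fin m → ℝ | (Q'ᵀ * P i * Q') *ᵥ y = y}) = {0} ↔
      (⋂ i ∈ E, {x : Fin d → ℝ | P i *ᵥ x = x})
        = ⋂ i ∈ H, {x : Fin d → ℝ | P i *ᵥ x = x} := by
  classical
  have hQd : ∀ (a : Fin m → ℝ) (w : Fin d → ℝ), (Q' *ᵥ a) ⬝ᵥ w = a ⬝ᵥ (Q'ᵀ *ᵥ w) := by
    intro a w; rw [← vecMul_transpose, ← dotProduct_mulVec]
  have hQQ : ∀ a : Fin m → ℝ, Q'ᵀ *ᵥ (Q' *ᵥ a) = a := by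
    intro a; rw [mulVec_mulVec, horth, one_mulVec]
  have hinj : ∀ a : Fin m → ℝ, Q' *ᵥ a = 0 → a = 0 := by
    intro a ha; rw [← hQQ a, ha, mulVec_zero]
  have hrange : ∀ zz : Fin d → ℝ, (∃ w, Q' *ᵥ w = zz) ↔
      (∀ x : Fin d → ℝ, (∀ i ∈ H, P i *ᵥ x = x) → x ⬝ᵥ zz = 0) := by
    intro zz
    exact Set.ext_iff.mp hspan zz
  -- Lemma B : fixed points correspond
  have hbar : ∀ i, (P i)ᵀ = P i → P i * P i = P i → ∀ y : Fin m → ℝ,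
      ((Q'ᵀ * P i * Q') *ᵥ y = y ↔ P i *ᵥ (Q' *ᵥ y) = Q' *ᵥ y) := by
    intro i hs hi y
    constructor
    · intro h
      have h' : Q'ᵀ *ᵥ (P i *ᵥ (Q' *ᵥ y)) = y := by
        rw [mulVec_mulVec, mulVec_mulVec]; exact h
      have hz : (P i *ᵥ (Q' *ᵥ y)) ⬝ᵥ (Q' *ᵥ y) = (Q' *ᵥ y) ⬝ᵥ (Q' *ᵥ y) := by
        rw [dotProduct_comm, hQd y (P i *ᵥ (Q' *ᵥ y)), h', hQd, hQQ]
      exact fix_of_dot' (P i) hs hi _ hz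
    · intro h
      rw [← mulVec_mulVec, ← mulVec_mulVec, h, hQQ]
  -- The submodule K = ⋂_{i ∈ H} fix(P i), inside Euclidean space
  let K : Submodule ℝ (EuclideanSpace ℝ (Fin d)) :=
  { carrier := {x : EuclideanSpace ℝ (Fin d) | ∀ i ∈ H, P i *ᵥ x.ofLp = x.ofLp}
    add_mem' := by
      intro a b ha hb
      intro i hi
      show P i *ᵥ (a.ofLp + b.ofLp) = a.ofLp + b.ofLp
      rw [mulVec_add, ha i hi, hb i hi]
    zero_mem' := by
      intro i hi
      show P i *ᵥ (0 : Fin d → ℝ) = 0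
      rw [mulVec_zero]
    smul_mem' := by
      intro c a ha
      intro i hi
      show P i *ᵥ (c • a.ofLp) = c • a.ofLp
      rw [mulVec_smul, ha i hi] }
  have hmemK : ∀ x : Fin d → ℝ, WithLp.toLp 2 x ∈ K ↔ ∀ i ∈ H, P i *ᵥ x = x := fun _ => Iff.rfl
  have hip : ∀ x y : EuclideanSpace ℝ (Fin d), (inner ℝ x y : ℝ) = x.ofLp ⬝ᵥ y.ofLp := by
    intro x y
    simp [PiLp.inner_apply, RCLike.inner_apply, dotProduct, mul_comm]
  have hperp : ∀ y : EuclideanSpace ℝ (Fin d), y ∈ Kᗮ ↔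
      (∀ x : Fin d → ℝ, (∀ i ∈ H, P i *ᵥ x = x) → x ⬝ᵥ y.ofLp = 0) := by
    intro y
    rw [Submodule.mem_orthogonal]
    constructor
    · intro h x hx
      have := h (WithLp.toLp 2 x) hx
      rwa [hip] at this
    · intro h x hx
      rw [hip x y]
      exact h x.ofLp hx
  constructor
  · -- forward direction
    intro hL
    apply Set.Subset.antisymm
    · intro x hx
      simp only [Set.mem_iInter, Set.mem_setOf_eq] at hx ⊢
      obtain ⟨k, hk, z, hz, hxkz⟩ :=
        K.exists_add_mem_mem_orthogonal (WithLp.toLp 2 x)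
      obtain ⟨w, hw⟩ := (hrange z.ofLp).mpr ((hperp z).mp hz)
      have hz' : z.ofLp = x - k.ofLp := by
        funext j
        have h2 : x j = k j + z j := congrArg (fun v : EuclideanSpace ℝ (Fin d) => v.ofLp j) hxkz
        show z j = x j - k j
        linarith
      have hzS : ∀ i ∈ E, P i *ᵥ (Q' *ᵥ w) = Q' *ᵥ w := by
        intro i hi
        rw [hw, hz', mulVec_sub, hx i hi, hk i (hE hi)]
      have hwfix : ∀ i ∈ E, (Q'ᵀ * P i * Q') *ᵥ w = w := fun i hi =>
        (hbar i (hsymm i (hE hi)) (hidem i (hE hi)) w).mpr (hzS i hi)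
      have hw0 : w ∈ ({0} : Set (Fin m → ℝ)) := by
        rw [← hL]
        simp only [Set.mem_iInter, Set.mem_setOf_eq]
        exact hwfix
      have hz0 : z.ofLp = 0 := by
        rw [← hw, Set.mem_singleton_iff.mp hw0, mulVec_zero]
      have hxk : x = fun j => k j := by
        funext j
        have h2 : x j = k j + z j := congrArg (fun v : EuclideanSpace ℝ (Fin d) => v.ofLp j) hxkz
        have h3 : z j = 0 := congrFun hz0 j
        rw [h2, h3, add_zero]
      intro i hi
      rw [hxk]
      exact hk i hi
    · intro x hx
      simp only [Set.mem_iInter, Set.mem_setOf_eq] at hx ⊢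
      exact fun i hi => hx i (hE hi)
  · -- backward direction
    intro hR
    apply Set.Subset.antisymm
    · intro y hy
      simp only [Set.mem_iInter, Set.mem_setOf_eq] at hy
      have hfix : ∀ i ∈ E, P i *ᵥ (Q' *ᵥ y) = Q' *ᵥ y := fun i hi =>
        (hbar i (hsymm i (hE hi)) (hidem i (hE hi)) y).mp (hy i hi)
      have hfixH : ∀ i ∈ H, P i *ᵥ (Q' *ᵥ y) = Q' *ᵥ y := by
        have hm : (Q' *ᵥ y) ∈ ⋂ i ∈ H, {x : Fin d → ℝ | P i *ᵥ x = x} := by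
          rw [← hR]
          simp only [Set.mem_iInter, Set.mem_setOf_eq]
          exact hfix
        simpa only [Set.mem_iInter, Set.mem_setOf_eq] using hm
      have h0 : (Q' *ᵥ y) ⬝ᵥ (Q' *ᵥ y) = 0 :=
        (hrange (Q' *ᵥ y)).mp ⟨y, rfl⟩ (Q' *ᵥ y) hfixH
      have : y = 0 := hinj y (dotProduct_self_eq_zero.mp h0)
      simp [this]
    · intro y hy
      simp only [Set.mem_singleton_iff] at hy
      subst hy
      simp only [Set.mem_iInter, Set.mem_setOf_eq]
      intro i _
      rw [mulVec_zero]
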